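/- arXiv:1402.0947 — 3 statements merged into one kernel-verified Lean document; each statement's English description precedes it below -/
import Mathlib

section
/- The Rényi entropy of order β of the Gumbel distribution with density λ(x) = e^{-x} e^{-e^{-x}} equals (1/(1-β)) · (log Γ(β) − β log β), for any β > 0 with β ≠ 1. -/
open Real MeasureTheory

lemma gumbel_integral (β : ℝ) (hβ : 0 < β) :
    (∫ x : ℝ, (Real.exp (-x) * Real.exp (-Real.exp (-x))) ^ β) =
      (1 / β) ^ β * Real.Gamma β := by
  rw [← integral_rpow_mul_exp_neg_mul_Ioi hβ hβ]
  have himg : (fun x : ℝ => Real.exp (-x)) '' Set.univ = Set.Ioi 0 := by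
    rw [Set.image_univ]
    have : Set.range (fun x : ℝ => Real.exp (-x)) = Set.range Real.exp := by
      rw [show (fun x : ℝ => Real.exp (-x)) = Real.exp ∘ Neg.neg from rfl,
        Set.range_comp, neg_surjective.range_eq, Set.image_univ]
    rw [this, Real.range_exp]
  have hderiv : ∀ x ∈ (Set.univ : Set ℝ),
      HasDerivWithinAt (fun x : ℝ => Real.exp (-x)) (-Real.exp (-x)) Set.univ x := by
    intro x _
    have h := (Real.hasDerivAt_exp (-x)).comp x (hasDerivAt_neg x)
    have h2 : HasDerivAt (fun x : ℝ => Real.exp (-x)) (-Real.exp (-x)) x := by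
      simpa [Function.comp_def, mul_comm] using h
    exact h2.hasDerivWithinAt
  have hinj : Set.InjOn (fun x : ℝ => Real.exp (-x)) Set.univ := by
    intro a _ b _ h
    exact neg_injective (Real.exp_injective h)
  have := integral_image_eq_integral_abs_deriv_smul (F := ℝ) MeasurableSet.univ hderiv hinj
    (fun t => t ^ (β - 1) * Real.exp (-(β * t)))
  rw [himg] at this
  rw [this, MeasureTheory.setIntegral_univ]
  congr 1
  ext x
  rw [abs_neg, abs_of_pos (Real.exp_pos _), smul_eq_mul,
    Real.mul_rpow (Real.exp_pos _).le (Real.exp_pos _).le]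
  simp only [← Real.exp_mul, ← Real.exp_add]
  ring_nf

/-- The Rényi entropy of order `β` of the Gumbel distribution with density
`λ(x) = e^{-x} e^{-e^{-x}}` equals `(1/(1-β)) (log Γ(β) - β log β)` for `β > 0`, `β ≠ 1`. -/
theorem renyi_entropy_gumbel (β : ℝ) (hβ : 0 < β) (hβ1 : β ≠ 1) :
    (1 / (1 - β)) * Real.log (∫ x : ℝ, (Real.exp (-x) * Real.exp (-Real.exp (-x))) ^ β) =
      (1 / (1 - β)) * (Real.log (Real.Gamma β) - β * Real.log β) := by
  rw [gumbel_integral β hβ]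
  congr 1
  rw [Real.log_mul (by positivity) (Real.Gamma_pos_of_pos hβ).ne',
    Real.log_rpow (by positivity), Real.log_div one_ne_zero hβ.ne', Real.log_one]
  ring
end

section
/- The Rényi entropy of order β of the Fréchet distribution with parameter α > 0 (density φ_α(x) = α x^{−α−1} e^{−x^{−α}} for x > 0) equals (1/(1−β)) · ((β−1) log α − ((β−1)(α+1)/α + 1) log β + log Γ((α+1)(β−1)/α + 1)), provided β > 1/(α+1) and β ≠ 1. -/
open Real MeasureTheory Set

/-- The Rényi entropy of order `β` of the Fréchet distribution with parameter `α > 0`. -/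
theorem renyi_entropy_frechet (α β : ℝ) (hα : 0 < α) (hβ : 1 / (α + 1) < β) (hβ1 : β ≠ 1) :
    (1 / (1 - β)) *
        Real.log (∫ x in Set.Ioi (0 : ℝ), (α * x ^ (-(α + 1)) * Real.exp (-x ^ (-α))) ^ β) =
      (1 / (1 - β)) *
        ((β - 1) * Real.log α - ((β - 1) * (α + 1) / α + 1) * Real.log β +
          Real.log (Real.Gamma ((α + 1) * (β - 1) / α + 1))) := by
  have hα1 : (0:ℝ) < α + 1 := by linarith
  have hβ0 : 0 < β := lt_trans (by positivity) hβ
  have hs' : 1 < (α + 1) * β := by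
    rw [div_lt_iff₀ hα1] at hβ; linarith
  set s : ℝ := ((α + 1) * β - 1) / α with hs_def
  have hs : 0 < s := div_pos (by linarith) hα
  have hse : (β - 1) * (α + 1) / α + 1 = s := by
    rw [hs_def]; field_simp; ring
  have hse2 : (α + 1) * (β - 1) / α + 1 = s := by
    rw [hs_def]; field_simp; ring
  have hq : (-1:ℝ) < (α + 1) * β - 2 := by linarith
  -- Step A : rewrite the integrand
  have h1 : ∫ x in Set.Ioi (0 : ℝ), (α * x ^ (-(α + 1)) * Real.exp (-x ^ (-α))) ^ β
      = α ^ β * ∫ y in Set.Ioi (0 : ℝ),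
        y ^ (-((α + 1) * β)) * Real.exp (-β * y ^ (-α)) := by
    rw [← integral_const_mul]
    refine setIntegral_congr_fun measurableSet_Ioi (fun x hx => ?_)
    have hx : (0:ℝ) < x := hx
    rw [mul_rpow (by positivity) (exp_pos _).le,
      mul_rpow hα.le (rpow_nonneg hx.le _),
      ← Real.rpow_mul hx.le,
      Real.rpow_def_of_pos (exp_pos _), Real.log_exp]
    ring_nf
  -- Step B : substitution y = x⁻¹
  have h2 : ∫ y in Set.Ioi (0 : ℝ), y ^ (-((α + 1) * β)) * Real.exp (-β * y ^ (-α))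
      = ∫ x in Set.Ioi (0 : ℝ), x ^ ((α + 1) * β - 2) * Real.exp (-β * x ^ α) := by
    rw [← integral_comp_rpow_Ioi
      (fun y => y ^ (-((α + 1) * β)) * Real.exp (-β * y ^ (-α)))
      (show (-1:ℝ) ≠ 0 by norm_num)]
    refine (setIntegral_congr_fun measurableSet_Ioi (fun x hx => ?_)).symm
    have hx : (0:ℝ) < x := hx
    have hx1 : (0:ℝ) < x ^ (-1:ℝ) := rpow_pos_of_pos hx _
    rw [smul_eq_mul, ← Real.rpow_mul hx.le, ← Real.rpow_mul hx.le]
    rw [show (-1:ℝ) * -((α + 1) * β) = (α + 1) * β by ring,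
      show (-1:ℝ) * -α = α by ring, abs_neg, abs_one]
    rw [one_mul, ← mul_assoc, ← Real.rpow_add hx]
    ring_nf
  -- Step C : Gamma integral
  have h3 : ∫ x in Set.Ioi (0 : ℝ), x ^ ((α + 1) * β - 2) * Real.exp (-β * x ^ α)
      = β ^ (-s) * (1 / α) * Real.Gamma s := by
    rw [integral_rpow_mul_exp_neg_mul_rpow hα hq hβ0]
    have e1 : ((α + 1) * β - 2 + 1) / α = s := by rw [hs_def]; ring
    have e2 : -((α + 1) * β - 2 + 1) / α = -s := by rw [hs_def]; ring
    rw [e1, e2]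
  rw [h1, h2, h3]
  have hΓ : 0 < Real.Gamma s := Real.Gamma_pos_of_pos hs
  have hval : α ^ β * (β ^ (-s) * (1 / α) * Real.Gamma s)
      = α ^ (β - 1) * (β ^ (-s) * Real.Gamma s) := by
    rw [Real.rpow_sub hα, Real.rpow_one]; field_simp
  rw [hval, Real.log_mul (by positivity) (by positivity),
    Real.log_mul (by positivity) (by positivity),
    Real.log_rpow hα, Real.log_rpow hβ0, hse2]
  rw [← hse]
  ring
end

section
/- The Rényi entropy of order β of the Weibull extreme-value distribution with parameter α (density ψ_α(x) = α |x|^{α−1} e^{−|x|^α} for x < 0) equals (1/(1−β)) · ((β−1) log α − ((β−1)(α−1)/α + 1) log β + log Γ((α−1)(β−1)/α + 1)), provided α > max(0, (β−1)/β) and β > 0, β ≠ 1. -/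
open Real MeasureTheory Set

/-- The Rényi entropy of order `β` of the Weibull extreme-value distribution with
parameter `α`. -/
theorem renyi_entropy_weibull (α β : ℝ) (hβ : 0 < β) (hβ1 : β ≠ 1)
    (hα : max 0 ((β - 1) / β) < α) :
    (1 / (1 - β)) *
        Real.log (∫ x in Set.Iio (0 : ℝ), (α * |x| ^ (α - 1) * Real.exp (-|x| ^ α)) ^ β) =
      (1 / (1 - β)) *
        ((β - 1) * Real.log α - ((β - 1) * (α - 1) / α + 1) * Real.log β +
          Real.log (Real.Gamma ((α - 1) * (β - 1) / α + 1))) := by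
  have hα0 : 0 < α := lt_of_le_of_lt (le_max_left _ _) hα
  have hα2 : (β - 1) / β < α := lt_of_le_of_lt (le_max_right _ _) hα
  have hq : (-1 : ℝ) < (α - 1) * β := by
    have := (div_lt_iff₀ hβ).mp hα2
    nlinarith
  have hs : 0 < (α - 1) * (β - 1) / α + 1 := by
    rw [div_add' _ _ _ hα0.ne']
    apply div_pos _ hα0
    nlinarith
  have hseq : ((α - 1) * β + 1) / α = (α - 1) * (β - 1) / α + 1 := by
    field_simp; ring
  have key : (∫ x in Set.Iio (0 : ℝ), (α * |x| ^ (α - 1) * Real.exp (-|x| ^ α)) ^ β)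
      = α ^ β * (β ^ (-(((α - 1) * β + 1) / α)) * (1 / α) *
        Real.Gamma (((α - 1) * β + 1) / α)) := by
    rw [show (∫ x in Set.Iio (0 : ℝ), (α * |x| ^ (α - 1) * Real.exp (-|x| ^ α)) ^ β)
        = ∫ x in Set.Ioi (0 : ℝ),
          (α * |(-x)| ^ (α - 1) * Real.exp (-|(-x)| ^ α)) ^ β by
      rw [← MeasureTheory.integral_Iic_eq_integral_Iio]
      exact ((integral_comp_neg_Ioi 0
        (fun y => (α * |y| ^ (α - 1) * Real.exp (-|y| ^ α)) ^ β)).trans (by norm_num)).symm]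
    rw [show (∫ x in Set.Ioi (0 : ℝ),
          (α * |(-x)| ^ (α - 1) * Real.exp (-|(-x)| ^ α)) ^ β)
        = ∫ x in Set.Ioi (0 : ℝ),
          α ^ β * (x ^ ((α - 1) * β) * Real.exp (-β * x ^ α)) by
      refine setIntegral_congr_fun measurableSet_Ioi (fun x hx => ?_)
      have hx0 : 0 < x := hx
      rw [abs_neg, abs_of_pos hx0, mul_rpow (by positivity) (Real.exp_pos _).le,
        mul_rpow hα0.le (by positivity), ← Real.rpow_mul hx0.le, ← Real.exp_mul,
        show -x ^ α * β = -β * x ^ α by ring, mul_assoc]]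
    rw [MeasureTheory.integral_const_mul,
      integral_rpow_mul_exp_neg_mul_rpow hα0 hq hβ]
    ring_nf
  have hG : 0 < Real.Gamma (((α - 1) * β + 1) / α) := Real.Gamma_pos_of_pos (hseq ▸ hs)
  rw [key, Real.log_mul (by positivity) (mul_pos (mul_pos (by positivity) (by positivity)) hG).ne',
    Real.log_mul (mul_pos (by positivity) (by positivity)).ne' hG.ne',
    Real.log_mul (by positivity) (by positivity),
    Real.log_rpow hα0, Real.log_rpow hβ, Real.log_div one_ne_zero hα0.ne',
    Real.log_one, hseq]
  ring
end
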